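/- The map x ↦ x̃ defined by x̃_{ij} = 0 if 1 ≤ i = j ≤ n+1 and x̃_{ij} = x_{i,j−1} if 1 ≤ i < j ≤ n+1 is an injective linear map X_n → X_{n+1} that sends GT-patterns to GT-patterns and sends vertices of GT-polytopes to vertices of GT-polytopes. -/

import Mathlib

/-- Valid index positions of a triangular array of size `n`. -/
abbrev IdxP (n i j : ℕ) : Prop := 1 ≤ i ∧ i ≤ j ∧ j ≤ n

/-- A Gelfand--Tsetlin pattern of size `n` (entries outside the triangle are ignored). -/
def IsGTPattern (n : ℕ) (x : ℕ → ℕ → ℝ) : Prop :=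
  (∀ i j, IdxP n i j → 0 ≤ x i j) ∧
  (∀ i j, 1 ≤ i → i ≤ j → j + 1 ≤ n → x i (j + 1) ≥ x i j ∧ x i j ≥ x (i + 1) (j + 1))

/-- Membership in the Gelfand--Tsetlin polytope `GT(λ,μ)`: a GT-pattern, vanishing outside the
triangle, with top row `λ` and `j`-th row sum `μ₁ + ⋯ + μⱼ`. -/
def GTMem (n : ℕ) (lam mu : ℕ → ℤ) (x : ℕ → ℕ → ℝ) : Prop :=
  IsGTPattern n x ∧
  (∀ i j, ¬ IdxP n i j → x i j = 0) ∧
  (∀ i, 1 ≤ i → i ≤ n → x i n = (lam i : ℝ)) ∧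
  (∀ j, 1 ≤ j → j ≤ n → ∑ i ∈ Finset.Icc 1 j, x i j = ∑ t ∈ Finset.Icc 1 j, (mu t : ℝ))

/-- The embedding `Xₙ ↪ X_{n+1}`: zero on the new diagonal, shifting all rows up by one. -/
noncomputable def emb (x : ℕ → ℕ → ℝ) : ℕ → ℕ → ℝ :=
  fun i j => if i = j then 0 else x i (j - 1)

/-- The shifted top row `(λ, 0)`. -/
def lamE (n : ℕ) (lam : ℕ → ℤ) : ℕ → ℤ := fun i => if i = n + 1 then 0 else lam i

/-- The shifted weight `(0, μ)` (prepending a zero). -/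
def muE (mu : ℕ → ℤ) : ℕ → ℤ := fun t => if t = 1 then 0 else mu (t - 1)

/-- The inverse of the embedding (restricted to the triangle). -/
noncomputable def invE (n : ℕ) (y : ℕ → ℕ → ℝ) : ℕ → ℕ → ℝ :=
  fun i j => if IdxP n i j then y i (j + 1) else 0

lemma muE_sum (mu : ℕ → ℤ) : ∀ j : ℕ,
    ∑ t ∈ Finset.Icc 1 (j + 1), ((muE mu t : ℤ) : ℝ) = ∑ t ∈ Finset.Icc 1 j, ((mu t : ℤ) : ℝ) := by
  intro j
  induction j with
  | zero => simp [muE]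
  | succ k ih =>
      rw [Finset.sum_Icc_succ_top (by omega : 1 ≤ k + 1 + 1), ih,
        Finset.sum_Icc_succ_top (by omega : 1 ≤ k + 1)]
      simp [muE]

lemma fwdPattern (n : ℕ) (x : ℕ → ℕ → ℝ) (hp : IsGTPattern n x) :
    IsGTPattern (n + 1) (emb x) := by
  obtain ⟨hnn, hineq⟩ := hp
  constructor
  · rintro i j ⟨h1, h2, h3⟩
    simp only [emb]
    split
    · exact le_refl 0
    · rename_i hij
      exact hnn i (j - 1) ⟨h1, by omega, by omega⟩
  · intro i j h1 h2 h3
    by_cases hij : i = j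
    · subst hij
      constructor
      · show emb x i (i + 1) ≥ emb x i i
        simp only [emb, if_pos rfl, if_neg (show ¬ i = i + 1 by omega)]
        simpa using hnn i i ⟨h1, le_refl _, by omega⟩
      · show emb x i i ≥ emb x (i + 1) (i + 1)
        simp [emb]
    · have hlt : i < j := lt_of_le_of_ne h2 hij
      have hmain := hineq i (j - 1) h1 (by omega) (by omega)
      have hj1 : j - 1 + 1 = j := by omega
      have hj2 : j + 1 - 1 = j := by omega
      rw [hj1] at hmain
      constructor
      · show emb x i (j + 1) ≥ emb x i j
        simp only [emb, if_neg (show ¬ i = j + 1 by omega), if_neg hij, hj2]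
        exact hmain.1
      · show emb x i j ≥ emb x (i + 1) (j + 1)
        simp only [emb, if_neg hij, if_neg (show ¬ i + 1 = j + 1 by omega), hj2]
        exact hmain.2

lemma fwd (n : ℕ) (lam mu : ℕ → ℤ) (x : ℕ → ℕ → ℝ) (hx : GTMem n lam mu x) :
    GTMem (n + 1) (lamE n lam) (muE mu) (emb x) := by
  obtain ⟨hp, hz, htop, hsum⟩ := hx
  refine ⟨fwdPattern n x hp, ?_, ?_, ?_⟩
  · intro i j hnot
    simp only [emb]
    split
    · rfl
    · rename_i hij
      apply hz
      rintro ⟨a, b, c⟩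
      exact hnot ⟨a, by omega, by omega⟩
  · intro i h1 h2
    simp only [emb, lamE]
    by_cases hi : i = n + 1
    · rw [if_pos hi, if_pos hi]; simp
    · rw [if_neg hi, if_neg hi, Nat.add_sub_cancel]
      exact htop i h1 (by omega)
  · intro j h1 h2
    obtain ⟨k, rfl⟩ : ∃ k, j = k + 1 := ⟨j - 1, by omega⟩
    rw [Finset.sum_Icc_succ_top (by omega : 1 ≤ k + 1), muE_sum]
    have hdiag : emb x (k + 1) (k + 1) = 0 := by simp [emb]
    rw [hdiag, add_zero]
    have hc : ∀ i ∈ Finset.Icc 1 k, emb x i (k + 1) = x i k := by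
      intro i hi
      simp only [Finset.mem_Icc] at hi
      simp [emb, show ¬ i = k + 1 by omega, Nat.add_sub_cancel]
    rw [Finset.sum_congr rfl hc]
    rcases Nat.eq_zero_or_pos k with hk | hk
    · subst hk; simp
    · exact hsum k hk (by omega)

lemma diagZero (n : ℕ) (lam mu : ℕ → ℤ) (y : ℕ → ℕ → ℝ)
    (hy : GTMem (n + 1) (lamE n lam) (muE mu) y) : ∀ k, y k k = 0 := by
  obtain ⟨⟨hnn, hineq⟩, hz, htop, hsum⟩ := hy
  have key : ∀ k, 1 ≤ k → k ≤ n + 1 → y k k = 0 := by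
    intro k
    induction k with
    | zero => intro h _; exact absurd h (by omega)
    | succ m ih =>
        intro _ hk
        rcases Nat.eq_zero_or_pos m with hm | hm
        · subst hm
          have := hsum 1 (le_refl 1) (by omega)
          simpa [muE] using this
        · have h0 := hnn (m + 1) (m + 1) ⟨by omega, le_refl _, hk⟩
          have h1 := (hineq m m hm (le_refl _) (by omega)).2
          have h2 := ih hm (by omega)
          linarith
  intro k
  by_cases h : 1 ≤ k ∧ k ≤ n + 1
  · exact key k h.1 h.2
  · exact hz k k (by rintro ⟨a, b, c⟩; exact h ⟨a, c⟩)

lemma invE_emb (n : ℕ) (x : ℕ → ℕ → ℝ) (hz : ∀ i j, ¬ IdxP n i j → x i j = 0) :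
    invE n (emb x) = x := by
  funext i j
  simp only [invE, emb]
  split
  · rename_i h
    rw [if_neg (show ¬ i = j + 1 by omega), Nat.add_sub_cancel]
  · rename_i h
    exact (hz i j h).symm

lemma emb_invE (n : ℕ) (lam mu : ℕ → ℤ) (y : ℕ → ℕ → ℝ)
    (hy : GTMem (n + 1) (lamE n lam) (muE mu) y) : emb (invE n y) = y := by
  have hd := diagZero n lam mu y hy
  obtain ⟨_, hz, _, _⟩ := hy
  funext i j
  simp only [emb, invE]
  split
  · rename_i h; subst h; exact (hd i).symm
  · rename_i h
    split
    · rename_i h2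
      congr 1
      omega
    · rename_i h2
      exact (hz i j (fun hc => h2 ⟨hc.1, by omega, by omega⟩)).symm

lemma bwd (n : ℕ) (lam mu : ℕ → ℤ) (y : ℕ → ℕ → ℝ)
    (hy : GTMem (n + 1) (lamE n lam) (muE mu) y) : GTMem n lam mu (invE n y) := by
  have hd := diagZero n lam mu y hy
  obtain ⟨⟨hnn, hineq⟩, hz, htop, hsum⟩ := hy
  refine ⟨⟨?_, ?_⟩, ?_, ?_, ?_⟩
  · intro i j h
    simp only [invE, if_pos h]
    exact hnn i (j + 1) ⟨h.1, by omega, by omega⟩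
  · intro i j h1 h2 h3
    have e1 : invE n y i j = y i (j + 1) := by
      simp only [invE]; rw [if_pos ⟨h1, h2, by omega⟩]
    have e2 : invE n y i (j + 1) = y i (j + 2) := by
      simp only [invE]; rw [if_pos ⟨h1, by omega, h3⟩]
    have e3 : invE n y (i + 1) (j + 1) = y (i + 1) (j + 2) := by
      simp only [invE]; rw [if_pos ⟨by omega, by omega, h3⟩]
    have g1 := hineq i (j + 1) h1 (by omega) (by omega)
    rw [e1, e2, e3]
    exact ⟨g1.1, g1.2⟩
  · intro i j h
    simp only [invE, if_neg h]
  · intro i h1 h2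
    have e : invE n y i n = y i (n + 1) := by
      simp only [invE]; rw [if_pos ⟨h1, h2, le_refl n⟩]
    rw [e, htop i h1 (by omega)]
    simp [lamE, show ¬ i = n + 1 by omega]
  · intro j h1 h2
    have e : ∀ i ∈ Finset.Icc 1 j, invE n y i j = y i (j + 1) := by
      intro i hi
      simp only [Finset.mem_Icc] at hi
      simp only [invE]; rw [if_pos ⟨hi.1, hi.2, h2⟩]
    rw [Finset.sum_congr rfl e]
    have hs := hsum (j + 1) (by omega) (by omega)
    rw [Finset.sum_Icc_succ_top (by omega : 1 ≤ j + 1), hd (j + 1), add_zero, muE_sum] at hs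
    exact hs

/-- The map `x ↦ x̃` is linear and injective on `Xₙ`, sends GT-patterns to GT-patterns, and
sends vertices of GT-polytopes to vertices of GT-polytopes. -/
theorem stmt12 (n : ℕ) :
    (∀ (a b : ℝ) (x y : ℕ → ℕ → ℝ),
      emb (fun i j => a * x i j + b * y i j) = fun i j => a * emb x i j + b * emb y i j) ∧
    (∀ x y : ℕ → ℕ → ℝ, (∀ i j, ¬ IdxP n i j → x i j = 0) →
      (∀ i j, ¬ IdxP n i j → y i j = 0) → emb x = emb y → x = y) ∧
    (∀ x : ℕ → ℕ → ℝ, IsGTPattern n x → (∀ i j, ¬ IdxP n i j → x i j = 0) →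
      IsGTPattern (n + 1) (emb x)) ∧
    (∀ lam mu : ℕ → ℤ, ∃ lam' mu' : ℕ → ℤ,
      (∀ x, GTMem n lam mu x → GTMem (n + 1) lam' mu' (emb x)) ∧
      (∀ x, x ∈ Set.extremePoints ℝ {y | GTMem n lam mu y} →
        emb x ∈ Set.extremePoints ℝ {y | GTMem (n + 1) lam' mu' y})) := by
  refine ⟨?_, ?_, ?_, ?_⟩
  · intro a b x y
    funext i j
    by_cases h : i = j <;> simp [emb, h]
  · intro x y hx hy h
    funext i j
    by_cases hij : IdxP n i j
    · have := congrFun (congrFun h i) (j + 1)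
      simpa [emb, show ¬ i = j + 1 by omega, Nat.add_sub_cancel] using this
    · rw [hx i j hij, hy i j hij]
  · intro x hp _
    exact fwdPattern n x hp
  · intro lam mu
    refine ⟨lamE n lam, muE mu, fun x hx => fwd n lam mu x hx, ?_⟩
    intro x hx
    obtain ⟨hxS, hext⟩ := hx
    refine ⟨fwd n lam mu x hxS, ?_⟩
    intro y₁ hy₁ y₂ hy₂ hseg
    obtain ⟨a, b, ha, hb, hab, heq⟩ := hseg
    have hx₁ : invE n y₁ ∈ {y | GTMem n lam mu y} := bwd n lam mu y₁ hy₁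
    have hx₂ : invE n y₂ ∈ {y | GTMem n lam mu y} := bwd n lam mu y₂ hy₂
    have hmid : a • invE n y₁ + b • invE n y₂ = x := by
      funext i j
      simp only [Pi.add_apply, Pi.smul_apply, smul_eq_mul, invE]
      by_cases h : IdxP n i j
      · rw [if_pos h, if_pos h]
        have hpt := congrFun (congrFun heq i) (j + 1)
        simp only [Pi.add_apply, Pi.smul_apply, smul_eq_mul] at hpt
        rw [hpt]
        simp [emb, show ¬ i = j + 1 by omega, Nat.add_sub_cancel]
      · rw [if_neg h, if_neg h, hxS.2.1 i j h]
        ring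
    have h12 := hext hx₁ hx₂ ⟨a, b, ha, hb, hab, hmid⟩
    rw [← emb_invE n lam mu y₁ hy₁, h12]
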